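/- The Fibonacci cube Γ_n is an isometric subgraph of the hypercube Q_n; that is, for any two vertices x, y of Γ_n, the distance between x and y in Γ_n equals their Hamming distance. -/

import Mathlib

open SimpleGraph

/-- The `n`-dimensional hypercube: vertices are binary strings of length `n`,
adjacent iff they differ in exactly one bit (Hamming distance 1). -/
def Qcube (n : ℕ) : SimpleGraph (Fin n → Bool) where
  Adj x y := hammingDist x y = 1
  symm := ⟨fun x y h => by show hammingDist y x = 1; rwa [hammingDist_comm]⟩
  loopless := ⟨fun x h => by simp [hammingDist_self] at h⟩

/-- A binary string has no two consecutive ones. -/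
def NoConsecOnes {n : ℕ} (x : Fin n → Bool) : Prop :=
  ∀ i j : Fin n, (j : ℕ) = (i : ℕ) + 1 → ¬(x i = true ∧ x j = true)

/-- The vertex set of the Fibonacci cube: binary strings with no two
consecutive ones. -/
def fibSet (n : ℕ) : Set (Fin n → Bool) := {x | NoConsecOnes x}

/-- The Fibonacci cube `Γ_n`, the subgraph of `Q_n` induced by strings with no
two consecutive ones. -/
def FibCube (n : ℕ) : SimpleGraph ↥(fibSet n) := (Qcube n).induce (fibSet n)

lemma noConsec_mono {n : ℕ} {u w : Fin n → Bool}
    (hsub : ∀ j, u j = true → w j = true) (hw : NoConsecOnes w) : NoConsecOnes u := by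
  intro i j hij ⟨h1, h2⟩
  exact hw i j hij ⟨hsub _ h1, hsub _ h2⟩

lemma ham_update {n : ℕ} (x y : Fin n → Bool) (i : Fin n) (h : x i ≠ y i) :
    hammingDist (Function.update x i (y i)) y + 1 = hammingDist x y := by
  unfold hammingDist
  have hset : ({j | Function.update x i (y i) j ≠ y j} : Finset (Fin n)) =
      ({j | x j ≠ y j} : Finset (Fin n)).erase i := by
    ext j
    simp only [Finset.mem_filter, Finset.mem_univ, true_and, Finset.mem_erase]
    by_cases hj : j = i
    · subst hj; simp
    · rw [Function.update_of_ne hj]; tauto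
  rw [hset, Finset.card_erase_add_one]
  simp [h]

lemma ham_update_self {n : ℕ} (x y : Fin n → Bool) (i : Fin n) (h : x i ≠ y i) :
    hammingDist x (Function.update x i (y i)) = 1 := by
  unfold hammingDist
  have hset : ({j | x j ≠ Function.update x i (y i) j} : Finset (Fin n)) = {i} := by
    ext j
    simp only [Finset.mem_filter, Finset.mem_univ, true_and, Finset.mem_singleton]
    by_cases hj : j = i
    · subst hj; simpa using h
    · rw [Function.update_of_ne hj]; simp [hj]
  rw [hset, Finset.card_singleton]

lemma fib_adj {n : ℕ} (a b : ↥(fibSet n)) (h : hammingDist a.val b.val = 1) :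
    (FibCube n).Adj a b := h

/-- Upper bound: there is a walk in the Fibonacci cube of length ≤ Hamming distance. -/
lemma fib_walk {n : ℕ} (k : ℕ) : ∀ x y : ↥(fibSet n), hammingDist x.val y.val = k →
    ∃ p : (FibCube n).Walk x y, p.length ≤ k := by
  induction k with
  | zero =>
    intro x y h
    have : x = y := Subtype.ext (hammingDist_eq_zero.mp h)
    subst this
    exact ⟨SimpleGraph.Walk.nil, le_rfl⟩
  | succ k ih =>
    intro x y h
    -- there is a differing index
    have hne : x.val ≠ y.val := by
      intro he; rw [he, hammingDist_self] at h; exact Nat.succ_ne_zero k h.symm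
    have hdiff : ∃ i, x.val i ≠ y.val i := by
      by_contra hc
      push_neg at hc
      exact hne (funext hc)
    by_cases hd : ∃ i, x.val i = true ∧ y.val i = false
    · -- flip a 1 of x down to 0
      obtain ⟨i, hx1, hy0⟩ := hd
      have hxy : x.val i ≠ y.val i := by rw [hx1, hy0]; simp
      set u : Fin n → Bool := Function.update x.val i (y.val i) with hu
      have hsub : ∀ j, u j = true → x.val j = true := by
        intro j hj
        by_cases hji : j = i
        · subst hji; rw [hu, Function.update_self, hy0] at hj; exact absurd hj (by simp)
        · rwa [hu, Function.update_of_ne hji] at hj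
      have hufib : u ∈ fibSet n := noConsec_mono hsub x.2
      have hadj : (FibCube n).Adj x ⟨u, hufib⟩ := fib_adj _ _ (ham_update_self _ _ _ hxy)
      have hham : hammingDist u y.val = k := by
        rw [hu]
        have := ham_update x.val y.val i hxy
        omega
      obtain ⟨p, hp⟩ := ih ⟨u, hufib⟩ y hham
      exact ⟨SimpleGraph.Walk.cons hadj p, by simpa using Nat.succ_le_succ hp⟩
    · -- every difference is a 0 of x / 1 of y; flip one up
      push_neg at hd
      obtain ⟨i, hxy⟩ := hdiff
      have hx0 : x.val i = false := by
        cases hxi : x.val i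
        · rfl
        · have := hd i hxi; cases hyi : y.val i <;> simp_all
      have hy1 : y.val i = true := by
        rw [hx0] at hxy; cases hyi : y.val i <;> simp_all
      set u : Fin n → Bool := Function.update x.val i (y.val i) with hu
      have hsub : ∀ j, u j = true → y.val j = true := by
        intro j hj
        by_cases hji : j = i
        · subst hji; exact hy1
        · rw [hu, Function.update_of_ne hji] at hj
          by_cases hyj : y.val j = true
          · exact hyj
          · have := hd j hj; cases hyj' : y.val j <;> simp_all
      have hufib : u ∈ fibSet n := noConsec_mono hsub y.2
      have hadj : (FibCube n).Adj x ⟨u, hufib⟩ := fib_adj _ _ (ham_update_self _ _ _ hxy)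
      have hham : hammingDist u y.val = k := by
        rw [hu]
        have := ham_update x.val y.val i hxy
        omega
      obtain ⟨p, hp⟩ := ih ⟨u, hufib⟩ y hham
      exact ⟨SimpleGraph.Walk.cons hadj p, by simpa using Nat.succ_le_succ hp⟩

/-- Lower bound: any walk has length at least the Hamming distance. -/
lemma ham_le_walk {n : ℕ} : ∀ {x y : ↥(fibSet n)} (p : (FibCube n).Walk x y),
    hammingDist x.val y.val ≤ p.length
  | _, _, SimpleGraph.Walk.nil => by simp [hammingDist_self]
  | x, y, SimpleGraph.Walk.cons (v := b) h p => by
    have h1 : hammingDist x.val b.val = 1 := h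
    have ih := ham_le_walk p
    have tri := hammingDist_triangle x.val b.val y.val
    simp only [SimpleGraph.Walk.length_cons]
    omega

/-- The Fibonacci cube `Γ_n` is an isometric subgraph of `Q_n`: the distance in
`Γ_n` between any two vertices equals their Hamming distance. -/
theorem stmt11 (n : ℕ) (x y : ↥(fibSet n)) :
    (FibCube n).dist x y = hammingDist x.val y.val := by
  obtain ⟨p, hp⟩ := fib_walk (hammingDist x.val y.val) x y rfl
  have hub : (FibCube n).dist x y ≤ hammingDist x.val y.val :=
    le_trans (SimpleGraph.dist_le p) hp
  have hreach : (FibCube n).Reachable x y := ⟨p⟩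
  obtain ⟨q, hq⟩ := hreach.exists_walk_length_eq_dist
  have hlb : hammingDist x.val y.val ≤ (FibCube n).dist x y := hq ▸ ham_le_walk q
  omega
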